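/- Let L, X, Y be as in the Riesz–Kantorovich theorem (X directed with RDP, Y a Dedekind complete sequentially P-Archimedean L-vector lattice). For an increasing net (T_α) in L_b(X,Y) and T ∈ L_b(X,Y), one has T_α ↑ T in L_b(X,Y) if and only if T_α(x) ↑ T(x) in Y for every x ∈ X⁺. -/

import Mathlib

/-- A Dedekind complete unital `f`-algebra over the reals. -/
class DFAlgebra (L : Type*) extends CommRing L, Lattice L, Algebra ℝ L where
  add_le_add_left : ∀ a b : L, a ≤ b → ∀ c : L, c + a ≤ c + b
  mul_nonneg : ∀ a b : L, 0 ≤ a → 0 ≤ b → 0 ≤ a * b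
  f_prop : ∀ a b c : L, a ⊓ b = 0 → 0 ≤ c → (c * a) ⊓ b = 0
  algebraMap_nonneg : ∀ r : ℝ, 0 ≤ r → 0 ≤ Algebra.algebraMap ℝ L r
  dedekind : ∀ S : Set L, S.Nonempty → BddAbove S → ∃ a : L, IsLUB S a

/-- A partially ordered `L`-module. -/
class POModule (L : Type*) [DFAlgebra L] (X : Type*) extends
    AddCommGroup X, Module L X, PartialOrder X where
  add_le_add_left : ∀ a b : X, a ≤ b → ∀ c : X, c + a ≤ c + b
  smul_le_smul : ∀ l : L, 0 ≤ l → ∀ a b : X, a ≤ b → l • a ≤ l • b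
/-- An L-vector lattice: a PO L-module whose order is a lattice order. -/
class LVectorLattice (L : Type*) [DFAlgebra L] (X : Type*) extends
    AddCommGroup X, Module L X, Lattice X where
  add_le_add_left : ∀ a b : X, a ≤ b → ∀ c : X, c + a ≤ c + b
  smul_le_smul : ∀ l : L, 0 ≤ l → ∀ a b : X, a ≤ b → l • a ≤ l • b

section Lb

variable (L X Y : Type*) [DFAlgebra L] [POModule L X] [LVectorLattice L Y]

/-- An operator is order-bounded if it maps order intervals into order
intervals. -/
def OrderBounded (S : X →ₗ[L] Y) : Prop :=
  ∀ a b : X, ∃ c d : Y, ∀ z : X, a ≤ z → z ≤ b → c ≤ S z ∧ S z ≤ d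

/-- The order-bounded operators from X to Y. -/
abbrev Lb := {S : X →ₗ[L] Y // OrderBounded L X Y S}

/-- L_b(X,Y) is ordered by the cone of positive operators. -/
instance : Preorder (Lb L X Y) where
  le S T := ∀ x : X, 0 ≤ x → S.1 x ≤ T.1 x
  le_refl S x _ := le_refl _
  le_trans S T U hST hTU x hx := le_trans (hST x hx) (hTU x hx)

instance : Zero (Lb L X Y) :=
  ⟨⟨0, fun _ _ => ⟨0, 0, fun z _ _ => by simp⟩⟩⟩

end Lb



section AuxL

variable {L : Type*} [DFAlgebra L]

instance : AddLeftMono L := ⟨fun c a b h => DFAlgebra.add_le_add_left a b h c⟩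
instance : AddRightMono L :=
  ⟨fun c a b h => by simpa [add_comm] using DFAlgebra.add_le_add_left a b h c⟩

theorem DFA.one_nn : (0 : L) ≤ 1 := by
  have := DFAlgebra.algebraMap_nonneg (L := L) 1 zero_le_one
  rwa [map_one] at this

theorem DFA.natCast_nn (n : ℕ) : (0 : L) ≤ (n : L) := by
  induction n with
  | zero => simp
  | succ n ih =>
    push_cast
    exact add_nonneg ih DFA.one_nn

theorem DFA.natCast_mono {n m : ℕ} (h : n ≤ m) : (n : L) ≤ (m : L) := by
  obtain ⟨k, rfl⟩ := Nat.exists_eq_add_of_le h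
  push_cast
  exact le_add_of_nonneg_right (DFA.natCast_nn k)

theorem DFA.nsmul_mono {a b : L} (h : a ≤ b) (n : ℕ) : n • a ≤ n • b := by
  induction n with
  | zero => simp
  | succ n ih => rw [succ_nsmul, succ_nsmul]; exact add_le_add ih h

theorem DFA.nsmul_nn {a : L} (h : 0 ≤ a) (n : ℕ) : 0 ≤ n • a := by
  simpa using DFA.nsmul_mono h n

theorem DFA.arch {b c : L} (h : ∀ n : ℕ, n • b ≤ c) : b ≤ 0 := by
  obtain ⟨s, hs⟩ := DFAlgebra.dedekind (Set.range fun n : ℕ => n • b)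
    ⟨0, ⟨0, by simp⟩⟩ ⟨c, by rintro x ⟨n, rfl⟩; exact h n⟩
  have h2 : s ≤ s - b := by
    refine hs.2 ?_
    rintro x ⟨n, rfl⟩
    have h3 := hs.1 (Set.mem_range_self (n + 1))
    rw [succ_nsmul] at h3
    exact le_sub_iff_add_le.mpr h3
  have h3 := le_sub_iff_add_le.mp h2
  exact (add_le_iff_nonpos_right s).mp h3

theorem DFA.mul_of_inf_eq_zero {a b : L} (h : a ⊓ b = 0) : a * b = 0 := by
  have ha : 0 ≤ a := by rw [← h]; exact inf_le_left
  have hb : 0 ≤ b := by rw [← h]; exact inf_le_right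
  have hab : 0 ≤ a * b := DFAlgebra.mul_nonneg a b ha hb
  have h2 : (a * b) ⊓ b = 0 := by
    have := DFAlgebra.f_prop a b b h hb
    rwa [mul_comm b a] at this
  have h3 : (a * b) ⊓ a = 0 := by
    exact DFAlgebra.f_prop b a a (by rwa [inf_comm] at h) ha
  have h4 : (a * b) ⊓ (a + b) = 0 := by
    refine le_antisymm ?_ (le_inf hab (add_nonneg ha hb))
    have c1 : (a * b) ⊓ (a + b) ≤ ((a * b) ⊓ a) + b := by
      calc (a * b) ⊓ (a + b) ≤ (a * b + b) ⊓ (a + b) :=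
            inf_le_inf_right _ (le_add_of_nonneg_right hb)
        _ = ((a * b) ⊓ a) + b := by rw [inf_add]
    rw [h3, zero_add] at c1
    have c2 : (a * b) ⊓ (a + b) ≤ (a * b) ⊓ b := le_inf inf_le_left c1
    rw [h2] at c2
    exact c2
  have h5 := DFAlgebra.f_prop (a + b) (a * b) (a + b)
    (by rwa [inf_comm] at h4) (add_nonneg ha hb)
  have h6 : a * b ≤ (a + b) * (a + b) := by
    have hexp : (a + b) * (a + b) = a * b + (a * a + (a * b + b * b)) := by ring
    rw [hexp]
    exact le_add_of_nonneg_right (add_nonneg (DFAlgebra.mul_nonneg a a ha ha)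
      (add_nonneg hab (DFAlgebra.mul_nonneg b b hb hb)))
  have h7 : a * b ≤ 0 := by
    calc a * b = (a * b) ⊓ (a * b) := (inf_idem _).symm
      _ ≤ ((a + b) * (a + b)) ⊓ (a * b) := inf_le_inf_right _ h6
      _ = 0 := h5
  exact le_antisymm h7 hab

theorem DFA.inf_add_eq_zero {x a b : L} (hb : 0 ≤ b)
    (h1 : x ⊓ a = 0) (h2 : x ⊓ b = 0) : x ⊓ (a + b) = 0 := by
  have hx : 0 ≤ x := by rw [← h1]; exact inf_le_left
  have ha : 0 ≤ a := by rw [← h1]; exact inf_le_right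
  refine le_antisymm ?_ (le_inf hx (add_nonneg ha hb))
  have c1 : x ⊓ (a + b) ≤ (x ⊓ a) + b := by
    calc x ⊓ (a + b) ≤ (x + b) ⊓ (a + b) := inf_le_inf_right _ (le_add_of_nonneg_right hb)
      _ = (x ⊓ a) + b := by rw [inf_add]
  rw [h1, zero_add] at c1
  have c2 : x ⊓ (a + b) ≤ x ⊓ b := le_inf inf_le_left c1
  rwa [h2] at c2

theorem DFA.inf_nsmul_eq_zero {x a : L} (h : x ⊓ a = 0) (n : ℕ) : x ⊓ (n • a) = 0 := by
  have hx : 0 ≤ x := by rw [← h]; exact inf_le_left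
  have ha : 0 ≤ a := by rw [← h]; exact inf_le_right
  induction n with
  | zero => simpa using inf_eq_right.mpr hx
  | succ n ih =>
    rw [succ_nsmul]
    exact DFA.inf_add_eq_zero ha ih h

theorem DFA.inf_isLUB_le_zero {A : Set L} {s x : L} (hs : IsLUB A s)
    (h : ∀ a ∈ A, x ⊓ a = 0) : x ⊓ s ≤ 0 := by
  have key : ∀ a ∈ A, a ≤ (s ⊔ x) - x := by
    intro a haA
    have h1 : (a ⊓ x) + (a ⊔ x) = a + x := inf_add_sup a x
    have h2 : a ⊓ x = 0 := by rw [inf_comm]; exact h a haA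
    rw [h2, zero_add] at h1
    have : a + x ≤ s ⊔ x + 0 := by
      rw [add_zero, ← h1]; exact sup_le_sup_right (hs.1 haA) x
    rw [add_zero] at this
    exact le_sub_iff_add_le.mpr this
  have h3 : s ≤ (s ⊔ x) - x := hs.2 key
  have h4 : s + x ≤ s ⊔ x := le_sub_iff_add_le.mp h3
  have h5 : (s ⊓ x) + (s ⊔ x) = s + x := inf_add_sup s x
  have h6 : (s ⊓ x) + (s ⊔ x) ≤ 0 + (s ⊔ x) := by rw [zero_add, h5]; exact h4
  rw [inf_comm]
  exact le_of_add_le_add_right h6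

/-- The component of the unit in the band generated by `a`. -/
noncomputable def DFA.bandE (a : L) : L :=
  (DFAlgebra.dedekind (Set.range fun k : ℕ => (k • a) ⊓ 1) ⟨_, ⟨0, rfl⟩⟩
    ⟨1, by rintro v ⟨k, rfl⟩; exact inf_le_right⟩).choose

theorem DFA.bandE_isLUB (a : L) : IsLUB (Set.range fun k : ℕ => (k • a) ⊓ 1) (DFA.bandE a) :=
  (DFAlgebra.dedekind (Set.range fun k : ℕ => (k • a) ⊓ 1) ⟨_, ⟨0, rfl⟩⟩
    ⟨1, by rintro v ⟨k, rfl⟩; exact inf_le_right⟩).choose_spec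

theorem DFA.bandE_nonneg (a : L) : 0 ≤ DFA.bandE a := by
  have h := (DFA.bandE_isLUB a).1 ⟨0, rfl⟩
  simp only [zero_nsmul] at h
  have h0 : (0 : L) ⊓ 1 = 0 := inf_eq_left.mpr DFA.one_nn
  rwa [h0] at h

theorem DFA.bandE_le_one (a : L) : DFA.bandE a ≤ 1 :=
  (DFA.bandE_isLUB a).2 (by rintro v ⟨k, rfl⟩; exact inf_le_right)

theorem DFA.bandE_mono {a a' : L} (h : a ≤ a') : DFA.bandE a ≤ DFA.bandE a' := by
  refine (DFA.bandE_isLUB a).2 ?_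
  rintro v ⟨k, rfl⟩
  exact le_trans (inf_le_inf_right _ (DFA.nsmul_mono h k)) ((DFA.bandE_isLUB a').1 ⟨k, rfl⟩)

theorem DFA.bandE_compl_inf {a : L} (ha : 0 ≤ a) : a ⊓ (1 - DFA.bandE a) = 0 := by
  set e := DFA.bandE a with he
  set b := a ⊓ (1 - e) with hbdef
  have hb0 : 0 ≤ b := le_inf ha (sub_nonneg.mpr (DFA.bandE_le_one a))
  have hb1 : b ≤ 1 - e := inf_le_right
  have hba : b ≤ a := inf_le_left
  have he1 : e ≤ 1 - b := le_sub_comm.mp hb1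
  have key : ∀ k : ℕ, k • b ≤ 1 - b := by
    intro k
    induction k with
    | zero =>
      simp only [zero_nsmul]
      exact sub_nonneg.mpr (le_trans hb1 (by simpa using DFA.bandE_nonneg a))
    | succ k ih =>
      have h1 : (k + 1) • b ≤ 1 := by
        rw [succ_nsmul]
        have := add_le_add_left ih b
        rwa [sub_add_cancel] at this
      have h2 : (k + 1) • b ≤ (k + 1) • a := DFA.nsmul_mono hba _
      have h3 : (k + 1) • b ≤ ((k + 1) • a) ⊓ 1 := le_inf h2 h1
      exact le_trans h3 (le_trans ((DFA.bandE_isLUB a).1 ⟨k + 1, rfl⟩) he1)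
  have : b ≤ 0 := DFA.arch (c := 1) fun n => le_trans (key n)
    (sub_le_self 1 hb0)
  exact le_antisymm this hb0

theorem DFA.bandE_self_inf {a : L} (ha : 0 ≤ a) : (1 - DFA.bandE a) ⊓ DFA.bandE a = 0 := by
  set e := DFA.bandE a
  have hce : 0 ≤ 1 - e := sub_nonneg.mpr (DFA.bandE_le_one a)
  have hgen : ∀ v ∈ Set.range fun k : ℕ => (k • a) ⊓ 1, (1 - e) ⊓ v = 0 := by
    rintro v ⟨k, rfl⟩
    have h1 : (1 - e) ⊓ a = 0 := by rw [inf_comm]; exact DFA.bandE_compl_inf ha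
    have h2 : (1 - e) ⊓ (k • a) = 0 := DFA.inf_nsmul_eq_zero h1 k
    refine le_antisymm ?_ (le_inf hce (le_inf (DFA.nsmul_nn ha k) DFA.one_nn))
    calc (1 - e) ⊓ ((k • a) ⊓ 1) ≤ (1 - e) ⊓ (k • a) := inf_le_inf_left _ inf_le_left
      _ = 0 := h2
  have h3 := DFA.inf_isLUB_le_zero (DFA.bandE_isLUB a) hgen
  exact le_antisymm h3 (le_inf hce (DFA.bandE_nonneg a))

theorem DFA.bandE_idem {a : L} (ha : 0 ≤ a) : DFA.bandE a * DFA.bandE a = DFA.bandE a := by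
  have h0 := DFA.mul_of_inf_eq_zero (a := DFA.bandE a) (b := 1 - DFA.bandE a)
    (by rw [inf_comm]; exact DFA.bandE_self_inf ha)
  rw [mul_sub, mul_one] at h0
  exact (sub_eq_zero.mp h0).symm

end AuxL

section AuxPi

variable {L : Type*} [DFAlgebra L]

/-- The band projections `π_n` associated to `l` (component of the unit in the band
generated by `(l - n·1)⁺`). -/
noncomputable def DFA.piSeq (l : L) (n : ℕ) : L := DFA.bandE ((l - (n : L)) ⊔ 0)

theorem DFA.piSeq_nonneg (l : L) (n : ℕ) : 0 ≤ DFA.piSeq l n := DFA.bandE_nonneg _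

theorem DFA.piSeq_le_one (l : L) (n : ℕ) : DFA.piSeq l n ≤ 1 := DFA.bandE_le_one _

theorem DFA.piSeq_idem (l : L) (n : ℕ) : DFA.piSeq l n * DFA.piSeq l n = DFA.piSeq l n :=
  DFA.bandE_idem le_sup_right

theorem DFA.piSeq_anti (l : L) : Antitone (DFA.piSeq l) := fun n m h =>
  DFA.bandE_mono (sup_le_sup_right (sub_le_sub_left (DFA.natCast_mono h) l) 0)

theorem DFA.negPart_inf_piSeq (l : L) (n : ℕ) :
    ((-(l - (n : L))) ⊔ 0) ⊓ DFA.piSeq l n = 0 := by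
  set a : L := (l - (n : L)) ⊔ 0 with hadef
  set x : L := (-(l - (n : L))) ⊔ 0 with hxdef
  have hx : 0 ≤ x := le_sup_right
  have ha : 0 ≤ a := le_sup_right
  have hxa : x ⊓ a = 0 := by
    have := posPart_inf_negPart_eq_zero (l - (n : L))
    rw [posPart_def, negPart_def] at this
    rw [inf_comm]
    exact this
  have hgen : ∀ v ∈ Set.range fun k : ℕ => (k • a) ⊓ 1, x ⊓ v = 0 := by
    rintro v ⟨k, rfl⟩
    have h2 : x ⊓ (k • a) = 0 := DFA.inf_nsmul_eq_zero hxa k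
    refine le_antisymm ?_ (le_inf hx (le_inf (DFA.nsmul_nn ha k) DFA.one_nn))
    calc x ⊓ ((k • a) ⊓ 1) ≤ x ⊓ (k • a) := inf_le_inf_left _ inf_le_left
      _ = 0 := h2
  have h3 := DFA.inf_isLUB_le_zero (DFA.bandE_isLUB a) hgen
  exact le_antisymm h3 (le_inf hx (DFA.bandE_nonneg a))

theorem DFA.piSeq_mul_le {l : L} (hl : 0 ≤ l) (n : ℕ) :
    (n : L) * DFA.piSeq l n ≤ l := by
  set a : L := (l - (n : L)) ⊔ 0 with hadef
  set x : L := (-(l - (n : L))) ⊔ 0 with hxdef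
  set e : L := DFA.piSeq l n with hedef
  have hax : a - x = l - (n : L) := by
    have := posPart_sub_negPart (l - (n : L))
    rw [posPart_def, negPart_def] at this
    exact this
  have hxe : x * e = 0 := DFA.mul_of_inf_eq_zero (DFA.negPart_inf_piSeq l n)
  have h1 : 0 ≤ (l - (n : L)) * e := by
    rw [← hax, sub_mul, hxe, sub_zero]
    exact DFAlgebra.mul_nonneg _ _ le_sup_right (DFA.piSeq_nonneg l n)
  have h2 : (n : L) * e ≤ l * e := by
    rw [sub_mul] at h1
    exact sub_nonneg.mp h1
  have h3 : l * e ≤ l := by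
    have : 0 ≤ l * (1 - e) := DFAlgebra.mul_nonneg _ _ hl
      (sub_nonneg.mpr (DFA.piSeq_le_one l n))
    rw [mul_sub, mul_one] at this
    exact sub_nonneg.mp this
  exact le_trans h2 h3

theorem DFA.compl_mul_le {l : L} (hl : 0 ≤ l) (n : ℕ) :
    (1 - DFA.piSeq l n) * l ≤ (n : L) := by
  set a : L := (l - (n : L)) ⊔ 0 with hadef
  set x : L := (-(l - (n : L))) ⊔ 0 with hxdef
  set e : L := DFA.piSeq l n with hedef
  have hax : a - x = l - (n : L) := by
    have := posPart_sub_negPart (l - (n : L))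
    rw [posPart_def, negPart_def] at this
    exact this
  have hca : (1 - e) * a = 0 := by
    refine DFA.mul_of_inf_eq_zero ?_
    rw [inf_comm]
    exact DFA.bandE_compl_inf le_sup_right
  have h1 : (1 - e) * (l - (n : L)) ≤ 0 := by
    rw [← hax, mul_sub, hca, zero_sub]
    simp only [neg_nonpos]
    exact DFAlgebra.mul_nonneg _ _ (sub_nonneg.mpr (DFA.piSeq_le_one l n)) le_sup_right
  have h2 : (1 - e) * l ≤ (1 - e) * (n : L) := by
    rw [mul_sub] at h1
    exact sub_nonpos.mp h1
  have h3 : (1 - e) * (n : L) ≤ (n : L) := by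
    have : 0 ≤ e * (n : L) :=
      DFAlgebra.mul_nonneg _ _ (DFA.piSeq_nonneg l n) (DFA.natCast_nn n)
    have h4 : (1 - e) * (n : L) = (n : L) - e * (n : L) := by ring
    rw [h4]
    exact sub_le_self _ this
  exact le_trans h2 h3

theorem DFA.piSeq_isGLB {l : L} (hl : 0 ≤ l) : IsGLB (Set.range (DFA.piSeq l)) 0 := by
  constructor
  · rintro _ ⟨n, rfl⟩
    exact DFA.piSeq_nonneg l n
  · intro q hq
    have hq' : ∀ n : ℕ, q ⊔ 0 ≤ DFA.piSeq l n := fun n =>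
      sup_le (hq ⟨n, rfl⟩) (DFA.piSeq_nonneg l n)
    have key : ∀ n : ℕ, n • (q ⊔ 0) ≤ l := by
      intro n
      rw [nsmul_eq_mul]
      calc (n : L) * (q ⊔ 0) ≤ (n : L) * DFA.piSeq l n := by
            have h0 : 0 ≤ (n : L) * (DFA.piSeq l n - (q ⊔ 0)) :=
              DFAlgebra.mul_nonneg _ _ (DFA.natCast_nn n) (sub_nonneg.mpr (hq' n))
            rw [mul_sub] at h0
            exact sub_nonneg.mp h0
        _ ≤ l := DFA.piSeq_mul_le hl n
    have := DFA.arch key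
    exact le_trans le_sup_left this

end AuxPi

section AuxY

variable {L Y : Type*} [DFAlgebra L] [LVectorLattice L Y]

theorem DFA.yAddLeftMono : AddLeftMono Y :=
  ⟨fun c a b h => LVectorLattice.add_le_add_left (L := L) a b h c⟩

theorem DFA.yAddRightMono : AddRightMono Y :=
  ⟨fun c a b h => by
    show a + c ≤ b + c
    rw [add_comm a c, add_comm b c]
    exact LVectorLattice.add_le_add_left (L := L) a b h c⟩

theorem DFA.ysmul_nn {l : L} (hl : 0 ≤ l) {y : Y} (hy : 0 ≤ y) : 0 ≤ l • y := by
  have := LVectorLattice.smul_le_smul l hl 0 y hy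
  rwa [smul_zero] at this

theorem DFA.ysmul_mono_l {l₁ l₂ : L} (h : l₁ ≤ l₂) {y : Y} (hy : 0 ≤ y) :
    l₁ • y ≤ l₂ • y := by
  haveI := DFA.yAddLeftMono (L := L) (Y := Y)
  have h0 : 0 ≤ (l₂ - l₁) • y := DFA.ysmul_nn (sub_nonneg.mpr h) hy
  rw [sub_smul] at h0
  exact sub_nonneg.mp h0

/-- Order continuity of `l • ·` on suprema, via the P-Archimedean property. -/
theorem DFA.smul_isLUB
    (hYParch : ∀ π : ℕ → L, (∀ n, π n * π n = π n) → Antitone π →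
      IsGLB (Set.range π) 0 → ∀ y : Y, 0 ≤ y → IsGLB (Set.range fun n => π n • y) 0)
    {l : L} (hl : 0 ≤ l) {κ : Type*} [Nonempty κ] {y : κ → Y} {s : Y}
    (hs : IsLUB (Set.range y) s) : IsLUB (Set.range fun i => l • y i) (l • s) := by
  haveI := DFA.yAddLeftMono (L := L) (Y := Y)
  haveI := DFA.yAddRightMono (L := L) (Y := Y)
  constructor
  · rintro _ ⟨i, rfl⟩
    exact LVectorLattice.smul_le_smul l hl _ _ (hs.1 ⟨i, rfl⟩)
  · intro u hu
    have hz : ∀ i, (0 : Y) ≤ s - y i := fun i => sub_nonneg.mpr (hs.1 ⟨i, rfl⟩)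
    have hzglb : ∀ w : Y, (∀ i, w ≤ s - y i) → w ≤ 0 := by
      intro w hw
      have h1 : ∀ i, y i ≤ s - w := fun i => le_sub_comm.mp (hw i)
      have h2 : s ≤ s - w := hs.2 (by rintro _ ⟨i, rfl⟩; exact h1 i)
      exact (add_le_iff_nonpos_right s).mp (le_sub_iff_add_le.mp h2)
    set u0 : Y := (l • s - u) ⊔ 0 with hu0def
    have hu0nn : (0 : Y) ≤ u0 := le_sup_right
    have hu0le : ∀ i, u0 ≤ l • (s - y i) := by
      intro i
      refine sup_le ?_ (DFA.ysmul_nn hl (hz i))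
      calc l • s - u ≤ l • s - l • y i := sub_le_sub_left (hu ⟨i, rfl⟩) _
        _ = l • (s - y i) := (smul_sub l s (y i)).symm
    have hcompl : ∀ n : ℕ, DFA.piSeq l n • u0 = u0 := by
      intro n
      have hc0 : (0 : L) ≤ 1 - DFA.piSeq l n := sub_nonneg.mpr (DFA.piSeq_le_one l n)
      have key : ∀ i, (1 - DFA.piSeq l n) • u0 ≤ (n : L) • (s - y i) := by
        intro i
        calc (1 - DFA.piSeq l n) • u0 ≤ (1 - DFA.piSeq l n) • (l • (s - y i)) :=
              LVectorLattice.smul_le_smul _ hc0 _ _ (hu0le i)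
          _ = ((1 - DFA.piSeq l n) * l) • (s - y i) := (mul_smul _ _ _).symm
          _ ≤ (n : L) • (s - y i) := DFA.ysmul_mono_l (DFA.compl_mul_le hl n) (hz i)
      have hv0 : (1 - DFA.piSeq l n) • u0 ≤ 0 := by
        rcases Nat.eq_zero_or_pos n with h0 | hpos
        · subst h0
          simpa using key (Classical.arbitrary κ)
        · set c : L := algebraMap ℝ L ((n : ℝ)⁻¹) with hcdef
          have hc : (0 : L) ≤ c := DFAlgebra.algebraMap_nonneg _ (by positivity)
          have hcn : c * (n : L) = 1 := by
            rw [hcdef, ← map_natCast (algebraMap ℝ L) n, ← map_mul]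
            rw [inv_mul_cancel₀ (Nat.cast_ne_zero.mpr hpos.ne' : (n : ℝ) ≠ 0)]
            exact map_one _
          have hvdiv : ∀ i, c • ((1 - DFA.piSeq l n) • u0) ≤ s - y i := by
            intro i
            calc c • ((1 - DFA.piSeq l n) • u0) ≤ c • ((n : L) • (s - y i)) :=
                  LVectorLattice.smul_le_smul c hc _ _ (key i)
              _ = (c * (n : L)) • (s - y i) := (mul_smul _ _ _).symm
              _ = s - y i := by rw [hcn, one_smul]
          have h5 : c • ((1 - DFA.piSeq l n) • u0) ≤ 0 := hzglb _ hvdiv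
          have h6 := LVectorLattice.smul_le_smul ((n : L)) (DFA.natCast_nn n) _ _ h5
          rw [smul_zero, ← mul_smul] at h6
          have hnc : (n : L) * c = 1 := by rw [mul_comm]; exact hcn
          rwa [hnc, one_smul] at h6
      have hv1 : (0 : Y) ≤ (1 - DFA.piSeq l n) • u0 := DFA.ysmul_nn hc0 hu0nn
      have hv : (1 - DFA.piSeq l n) • u0 = 0 := le_antisymm hv0 hv1
      have : (1 : L) • u0 = DFA.piSeq l n • u0 + (1 - DFA.piSeq l n) • u0 := by
        rw [← add_smul]
        ring_nf
      rw [hv, add_zero, one_smul] at this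
      exact this.symm
    have hP := hYParch (DFA.piSeq l) (DFA.piSeq_idem l) (DFA.piSeq_anti l)
      (DFA.piSeq_isGLB hl) u0 hu0nn
    have hlow : u0 ∈ lowerBounds (Set.range fun n => DFA.piSeq l n • u0) := by
      rintro _ ⟨n, rfl⟩
      show u0 ≤ DFA.piSeq l n • u0
      rw [hcompl n]
    have hu00 : u0 ≤ 0 := hP.2 hlow
    have : l • s - u ≤ 0 := le_trans le_sup_left hu00
    exact sub_nonpos.mp this
end AuxY

open Pointwise
/-- For an increasing net (T_α) in L_b(X,Y): T_α ↑ T iff T_α(x) ↑ T(x) for each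
x ∈ X⁺. -/
theorem stmt17 (L X Y : Type*) [DFAlgebra L] [POModule L X] [LVectorLattice L Y]
    (hXdir : ∀ x : X, ∃ a b : X, 0 ≤ a ∧ 0 ≤ b ∧ x = a - b)
    (hRDP : ∀ x y : X, 0 ≤ x → 0 ≤ y →
      Set.Icc (0 : X) (x + y) = Set.Icc (0 : X) x + Set.Icc (0 : X) y)
    (hYded : ∀ S : Set Y, S.Nonempty → BddAbove S → ∃ a : Y, IsLUB S a)
    (hYParch : ∀ π : ℕ → L, (∀ n, π n * π n = π n) → Antitone π →
      IsGLB (Set.range π) 0 → ∀ y : Y, 0 ≤ y → IsGLB (Set.range fun n => π n • y) 0)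
    {ι : Type*} [Preorder ι] [Nonempty ι] [IsDirected ι (· ≤ ·)]
    (T : ι → Lb L X Y) (hT : Monotone T) (S : Lb L X Y) :
    IsLUB (Set.range T) S ↔
      ∀ x : X, 0 ≤ x → IsLUB (Set.range fun i => (T i).1 x) (S.1 x) := by
  classical
  haveI : AddLeftMono X := ⟨fun c a b h => POModule.add_le_add_left (L := L) a b h c⟩
  haveI : AddLeftMono Y := DFA.yAddLeftMono (L := L) (Y := Y)
  haveI : AddRightMono Y := DFA.yAddRightMono (L := L) (Y := Y)
  -- helpers to move between the `Lb` order and pointwise inequalities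
  have hle : ∀ {A B : Lb L X Y}, A ≤ B → ∀ x : X, 0 ≤ x → A.1 x ≤ B.1 x := fun h => h
  have hle' : ∀ {A B : Lb L X Y}, (∀ x : X, 0 ≤ x → A.1 x ≤ B.1 x) → A ≤ B := fun h => h
  have hXsmul : ∀ (l : L), 0 ≤ l → ∀ x : X, 0 ≤ x → (0 : X) ≤ l • x := by
    intro l hl x hx
    have := POModule.smul_le_smul (L := L) l hl 0 x hx
    rwa [smul_zero] at this
  constructor
  · -- hard direction
    intro hS
    -- pointwise suprema of the net
    have hbdd : ∀ z : X, 0 ≤ z → BddAbove (Set.range fun i => (T i).1 z) := by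
      intro z hz
      exact ⟨S.1 z, by rintro _ ⟨i, rfl⟩; exact hle (hS.1 ⟨i, rfl⟩) z hz⟩
    obtain ⟨r, hr⟩ : ∃ r : X → Y, ∀ z : X, 0 ≤ z →
        IsLUB (Set.range fun i => (T i).1 z) (r z) := by
      refine ⟨fun z => if h : 0 ≤ z then
        (hYded _ (Set.range_nonempty _) (hbdd z h)).choose else 0, ?_⟩
      intro z h
      simp only [dif_pos h]
      exact (hYded _ (Set.range_nonempty _) (hbdd z h)).choose_spec
    have hr0 : r 0 = 0 := by
      refine (hr 0 le_rfl).unique ?_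
      have : (Set.range fun i => (T i).1 0) = {0} := by
        simp only [map_zero, Set.range_const]
      rw [this]
      exact isLUB_singleton
    have hrub : ∀ z : X, 0 ≤ z → ∀ i, (T i).1 z ≤ r z := fun z hz i => (hr z hz).1 ⟨i, rfl⟩
    have hrS : ∀ z : X, 0 ≤ z → r z ≤ S.1 z := fun z hz =>
      (hr z hz).2 (by rintro _ ⟨i, rfl⟩; exact hle (hS.1 ⟨i, rfl⟩) z hz)
    -- additivity of r on the positive cone
    have hradd : ∀ a b : X, 0 ≤ a → 0 ≤ b → r (a + b) = r a + r b := by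
      intro a b ha hb
      refine (hr _ (add_nonneg ha hb)).unique ?_
      constructor
      · rintro _ ⟨i, rfl⟩
        simp only [map_add]
        exact add_le_add (hrub a ha i) (hrub b hb i)
      · intro u hu
        refine le_sub_iff_add_le.mp ((hr a ha).2 ?_)
        rintro _ ⟨i, rfl⟩
        refine le_sub_comm.mp ((hr b hb).2 ?_)
        rintro _ ⟨j, rfl⟩
        obtain ⟨k, hik, hjk⟩ := exists_ge_ge i j
        have h3 : (T k).1 a + (T k).1 b ≤ u := by
          have := hu ⟨k, rfl⟩
          simpa only [map_add] using this
        refine le_sub_comm.mp ?_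
        calc (T i).1 a ≤ (T k).1 a := hle (hT hik) a ha
          _ ≤ u - (T k).1 b := le_sub_iff_add_le.mpr h3
          _ ≤ u - (T j).1 b := sub_le_sub_left (hle (hT hjk) b hb) u
    -- L⁺-homogeneity of r, via the order-continuity lemma
    have hrsmul : ∀ l : L, 0 ≤ l → ∀ a : X, 0 ≤ a → r (l • a) = l • r a := by
      intro l hl a ha
      refine (hr _ (hXsmul l hl a ha)).unique ?_
      have hbig := DFA.smul_isLUB hYParch hl (hr a ha)
      simpa only [map_smul] using hbig
    -- r is well-defined on differences
    have hwd : ∀ a b c d : X, 0 ≤ a → 0 ≤ b → 0 ≤ c → 0 ≤ d → a - b = c - d →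
        r a - r b = r c - r d := by
      intro a b c d ha hb hc hd h
      have h2 : a + d = c + b := sub_eq_sub_iff_add_eq_add.mp h
      have h3 : r a + r d = r c + r b := by
        rw [← hradd a d ha hd, ← hradd c b hc hb, h2]
      exact sub_eq_sub_iff_add_eq_add.mpr h3
    -- decompose arbitrary elements of X
    choose p q hp hq hpq using hXdir
    -- the candidate supremum operator
    have hlpos : ∀ l : L, (0 : L) ≤ l ⊔ 0 := fun l => le_sup_right
    have hsubL : ∀ l : L, (l ⊔ 0) - ((-l) ⊔ 0) = l := by
      intro l
      have := posPart_sub_negPart l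
      rwa [posPart_def, negPart_def] at this
    let Rmap : X →ₗ[L] Y :=
      { toFun := fun z => r (p z) - r (q z)
        map_add' := by
          intro z w
          show r (p (z + w)) - r (q (z + w)) = r (p z) - r (q z) + (r (p w) - r (q w))
          have e1 : p (z + w) - q (z + w) = (p z + p w) - (q z + q w) := by
            rw [← hpq (z + w)]
            conv_lhs => rw [hpq z, hpq w]
            abel
          have h := hwd _ _ _ _ (hp (z + w)) (hq (z + w))
            (add_nonneg (hp z) (hp w)) (add_nonneg (hq z) (hq w)) e1
          rw [h, hradd _ _ (hp z) (hp w), hradd _ _ (hq z) (hq w)]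
          abel
        map_smul' := by
          intro l z
          simp only [RingHom.id_apply]
          set lp : L := l ⊔ 0 with hlp
          set lm : L := (-l) ⊔ 0 with hlm
          have hplp : (0 : L) ≤ lp := le_sup_right
          have hplm : (0 : L) ≤ lm := le_sup_right
          have hsub : lp - lm = l := hsubL l
          have e1 : p (l • z) - q (l • z) =
              (lp • p z + lm • q z) - (lp • q z + lm • p z) := by
            rw [← hpq (l • z)]
            conv_lhs => rw [hpq z]
            rw [smul_sub, ← hsub, sub_smul, sub_smul]
            abel
          have h := hwd _ _ _ _ (hp (l • z)) (hq (l • z))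
            (add_nonneg (hXsmul lp hplp _ (hp z)) (hXsmul lm hplm _ (hq z)))
            (add_nonneg (hXsmul lp hplp _ (hq z)) (hXsmul lm hplm _ (hp z))) e1
          rw [h, hradd _ _ (hXsmul lp hplp _ (hp z)) (hXsmul lm hplm _ (hq z)),
            hradd _ _ (hXsmul lp hplp _ (hq z)) (hXsmul lm hplm _ (hp z)),
            hrsmul lp hplp _ (hp z), hrsmul lm hplm _ (hq z),
            hrsmul lp hplp _ (hq z), hrsmul lm hplm _ (hp z),
            smul_sub, ← hsub, sub_smul, sub_smul]
          abel }
    have hRpos : ∀ z : X, 0 ≤ z → Rmap z = r z := by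
      intro z hz
      have h := hwd _ _ _ _ (hp z) (hq z) hz le_rfl (by rw [← hpq z]; abel)
      show r (p z) - r (q z) = r z
      rw [h, hr0, sub_zero]
    have hOB : OrderBounded L X Y Rmap := by
      intro a b
      obtain ⟨c0, d0, hSbd⟩ := S.2 0 (b - a)
      obtain ⟨c1, d1, hTbd⟩ := (T (Classical.arbitrary ι)).2 0 (b - a)
      refine ⟨Rmap a + c1, Rmap a + d0, ?_⟩
      intro z hza hzb
      have hz0 : (0 : X) ≤ z - a := sub_nonneg.mpr hza
      have hz1 : z - a ≤ b - a := sub_le_sub_right hzb a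
      have hdec : Rmap z = Rmap a + r (z - a) := by
        have h1 : Rmap z = Rmap (a + (z - a)) := by rw [show a + (z - a) = z from by abel]
        rw [h1, map_add, hRpos _ hz0]
      have hup : r (z - a) ≤ d0 := le_trans (hrS _ hz0) (hSbd _ hz0 hz1).2
      have hlo : c1 ≤ r (z - a) := le_trans (hTbd _ hz0 hz1).1 (hrub _ hz0 _)
      constructor
      · rw [hdec]; exact add_le_add_right hlo _
      · rw [hdec]; exact add_le_add_right hup _
    -- R is an upper bound of the net, hence dominates S
    have hub : ∀ i, T i ≤ (⟨Rmap, hOB⟩ : Lb L X Y) := by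
      intro i
      refine hle' ?_
      intro z hz
      rw [hRpos z hz]
      exact hrub z hz i
    have hSR : S ≤ (⟨Rmap, hOB⟩ : Lb L X Y) :=
      hS.2 (by rintro _ ⟨i, rfl⟩; exact hub i)
    intro x hx
    constructor
    · rintro _ ⟨i, rfl⟩
      exact hle (hS.1 ⟨i, rfl⟩) x hx
    · intro v hv
      have h1 : S.1 x ≤ Rmap x := hle hSR x hx
      rw [hRpos x hx] at h1
      exact le_trans h1 ((hr x hx).2 hv)
  · -- easy direction
    intro h
    constructor
    · rintro _ ⟨i, rfl⟩
      exact hle' fun x hx => (h x hx).1 ⟨i, rfl⟩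
    · intro U hU
      exact hle' fun x hx => (h x hx).2 (by rintro _ ⟨i, rfl⟩; exact hle (hU ⟨i, rfl⟩) x hx)
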